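/- There exists a constant $C > 0$ such that for all $\beta \in (0, 1/2]$ and all $t \in (0, 1/4]$, one has $\Big|\beta^2 t^{\beta-2}(1-t^{\beta})^{-3}\big[(\beta-1)+(\beta+1)t^{\beta}\big]\Big| \le C\, t^{\beta - 2}$. -/
import Mathlib


theorem stmt_8 :
    ∃ C > (0:ℝ), ∀ β ∈ Set.Ioc (0:ℝ) (1/2), ∀ t ∈ Set.Ioc (0:ℝ) (1/4),
      |β ^ 2 * t ^ (β - 2) * ((1 - t ^ β) ^ 3)⁻¹ * ((β - 1) + (β + 1) * t ^ β)|
        ≤ C * t ^ (β - 2) := by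
  refine ⟨9, by norm_num, ?_⟩
  rintro β ⟨hβ0, hβ2⟩ t ⟨ht0, ht4⟩
  set u := t ^ β with hu
  have ht2 : (0:ℝ) < t ^ (β - 2) := Real.rpow_pos_of_pos ht0 _
  have hu0 : 0 < u := Real.rpow_pos_of_pos ht0 β
  -- bounds on log 4
  have hlog4 : Real.log 4 = 2 * Real.log 2 := by
    rw [show (4:ℝ) = 2 ^ 2 by norm_num, Real.log_pow]; push_cast; ring
  have hL1 : (4/3:ℝ) ≤ Real.log 4 := by
    rw [hlog4]; nlinarith [Real.log_two_gt_d9]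
  have hL2 : Real.log 4 ≤ (3/2:ℝ) := by
    rw [hlog4]; nlinarith [Real.log_two_lt_d9]
  -- key: 1 - u ≥ (4/5) β
  have hkey : (4/5:ℝ) * β ≤ 1 - u := by
    have h1 : u ≤ (1/4 : ℝ) ^ β := Real.rpow_le_rpow ht0.le ht4 hβ0.le
    have h2 : ((1:ℝ)/4) ^ β = ((4:ℝ) ^ β)⁻¹ := by
      rw [one_div, Real.inv_rpow (by norm_num)]
    have h3 : (4:ℝ) ^ β = Real.exp (Real.log 4 * β) := by
      rw [Real.rpow_def_of_pos (by norm_num)]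
    have h4 : 1 + Real.log 4 * β ≤ Real.exp (Real.log 4 * β) := by
      have := Real.add_one_le_exp (Real.log 4 * β); linarith
    have h5 : u ≤ (1 + Real.log 4 * β)⁻¹ := by
      rw [h2, h3] at h1
      have hpos : (0:ℝ) < 1 + Real.log 4 * β := by nlinarith
      calc u ≤ (Real.exp (Real.log 4 * β))⁻¹ := h1
        _ ≤ (1 + Real.log 4 * β)⁻¹ := by
            apply inv_anti₀ hpos h4
    have hpos : (0:ℝ) < 1 + Real.log 4 * β := by nlinarith
    have h6 : (1 + Real.log 4 * β)⁻¹ ≤ 1 - (4/5:ℝ) * β := by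
      rw [inv_le_iff_one_le_mul₀ hpos]
      nlinarith [mul_nonneg (mul_nonneg (sub_nonneg.2 hL1) hβ0.le)
          (show (0:ℝ) ≤ 1 - (4/5) * β by linarith),
        mul_nonneg hβ0.le (show (0:ℝ) ≤ 1/2 - β by linarith)]
    linarith
  have h1u : 0 < 1 - u := by nlinarith
  -- rewrite absolute value
  have habs : |β ^ 2 * t ^ (β - 2) * ((1 - u) ^ 3)⁻¹ * ((β - 1) + (β + 1) * u)|
      = β ^ 2 * t ^ (β - 2) * ((1 - u) ^ 3)⁻¹ * |(β - 1) + (β + 1) * u| := by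
    rw [abs_mul]
    congr 1
    rw [abs_of_pos (by positivity)]
  rw [habs]
  have hbr : |(β - 1) + (β + 1) * u| ≤ (1 - u) + 2 * β := by
    rw [abs_le]
    constructor <;> nlinarith
  have hmain : β ^ 2 * ((1 - u) ^ 3)⁻¹ * ((1 - u) + 2 * β) ≤ 9 := by
    have hk2 : (4/5 * β) ^ 2 ≤ (1 - u) ^ 2 := pow_le_pow_left₀ (by positivity) hkey 2
    have hk3 : (4/5 * β) ^ 3 ≤ (1 - u) ^ 3 := pow_le_pow_left₀ (by positivity) hkey 3
    rw [show β ^ 2 * ((1 - u) ^ 3)⁻¹ * ((1 - u) + 2 * β)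
        = (β ^ 2 * ((1 - u) + 2 * β)) / (1 - u) ^ 3 by rw [div_eq_mul_inv]; ring,
      div_le_iff₀ (by positivity)]
    nlinarith [mul_le_mul_of_nonneg_right hk2 h1u.le, hk3]
  calc β ^ 2 * t ^ (β - 2) * ((1 - u) ^ 3)⁻¹ * |(β - 1) + (β + 1) * u|
      ≤ β ^ 2 * t ^ (β - 2) * ((1 - u) ^ 3)⁻¹ * ((1 - u) + 2 * β) := by
        apply mul_le_mul_of_nonneg_left hbr (by positivity)
    _ = (β ^ 2 * ((1 - u) ^ 3)⁻¹ * ((1 - u) + 2 * β)) * t ^ (β - 2) := by ring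
    _ ≤ 9 * t ^ (β - 2) := by
        apply mul_le_mul_of_nonneg_right hmain ht2.le
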